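/- Let h : [0,1] → ℝ² be continuous and α ≠ 0 such that h₂ satisfies α h₂(t) = ½(∫₀^t h₁(s)ds − ∫_t^1 h₁(s)ds) and α h₁(t) = −½(∫₀^t h₂(s)ds − ∫_t^1 h₂(s)ds). Then h is continuously differentiable, satisfies h'(t) = (1/α) M h(t) with M = [[0,−1],[1,0]], and h(1) + h(0) = 0; consequently if h is not identically zero then α = ±(π(2n+1))^{−1}/2·2, i.e., 1/α ∈ {π(2n+1) : n ∈ ℤ}. -/

import Mathlib

open Real intervalIntegral

/-- Eigenvalue problem for the Lévy kernel operator: if `h = (h₁,h₂)` is continuous on `[0,1]`,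
`α ≠ 0`, and `α h₂(t) = ½(∫₀ᵗ h₁ − ∫ₜ¹ h₁)`, `α h₁(t) = −½(∫₀ᵗ h₂ − ∫ₜ¹ h₂)`, then `h` is
continuously differentiable with `h' = (1/α) M h`, `M = [[0,−1],[1,0]]`, satisfies
`h(1) + h(0) = 0`, and if `h` is not identically zero on `[0,1]` then
`1/α ∈ {π(2n+1) : n ∈ ℤ}`. -/
theorem levy_kernel_eigenvalue_ode
    (h₁ h₂ : ℝ → ℝ)
    (hc₁ : ContinuousOn h₁ (Set.Icc 0 1)) (hc₂ : ContinuousOn h₂ (Set.Icc 0 1))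
    (α : ℝ) (hα : α ≠ 0)
    (heq₂ : ∀ t ∈ Set.Icc (0:ℝ) 1,
      α * h₂ t = (1 / 2) * ((∫ s in (0:ℝ)..t, h₁ s) - ∫ s in t..(1:ℝ), h₁ s))
    (heq₁ : ∀ t ∈ Set.Icc (0:ℝ) 1,
      α * h₁ t = -(1 / 2) * ((∫ s in (0:ℝ)..t, h₂ s) - ∫ s in t..(1:ℝ), h₂ s)) :
    (∀ t ∈ Set.Icc (0:ℝ) 1,
      HasDerivWithinAt h₁ (-(1 / α) * h₂ t) (Set.Icc 0 1) t ∧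
      HasDerivWithinAt h₂ ((1 / α) * h₁ t) (Set.Icc 0 1) t) ∧
    (h₁ 1 + h₁ 0 = 0 ∧ h₂ 1 + h₂ 0 = 0) ∧
    ((¬ ∀ t ∈ Set.Icc (0:ℝ) 1, h₁ t = 0 ∧ h₂ t = 0) →
      ∃ n : ℤ, 1 / α = Real.pi * (2 * (n : ℝ) + 1)) := by
  have h0m : (0:ℝ) ∈ Set.Icc (0:ℝ) 1 := by norm_num
  have h1m : (1:ℝ) ∈ Set.Icc (0:ℝ) 1 := by norm_num
  -- continuous extensions
  set p : ℝ → ℝ := fun x => min 1 (max 0 x) with hp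
  have hpc : Continuous p := continuous_const.min (continuous_const.max continuous_id)
  have hpmem : ∀ x, p x ∈ Set.Icc (0:ℝ) 1 := by
    intro x
    exact ⟨le_min zero_le_one (le_max_left 0 x), min_le_left _ _⟩
  have hpeq : ∀ x ∈ Set.Icc (0:ℝ) 1, p x = x := by
    intro x hx
    simp [hp, max_eq_right hx.1, min_eq_right hx.2]
  set H₁ : ℝ → ℝ := fun x => h₁ (p x) with hH₁
  set H₂ : ℝ → ℝ := fun x => h₂ (p x) with hH₂
  have hHc₁ : Continuous H₁ := hc₁.comp_continuous hpc hpmem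
  have hHc₂ : Continuous H₂ := hc₂.comp_continuous hpc hpmem
  have hHe₁ : ∀ x ∈ Set.Icc (0:ℝ) 1, H₁ x = h₁ x := fun x hx => by rw [hH₁]; simp [hpeq x hx]
  have hHe₂ : ∀ x ∈ Set.Icc (0:ℝ) 1, H₂ x = h₂ x := fun x hx => by rw [hH₂]; simp [hpeq x hx]
  -- integrals agree
  have hIeq₁ : ∀ a ∈ Set.Icc (0:ℝ) 1, ∀ b ∈ Set.Icc (0:ℝ) 1,
      (∫ s in a..b, H₁ s) = ∫ s in a..b, h₁ s := by
    intro a ha b hb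
    exact intervalIntegral.integral_congr (fun x hx => hHe₁ x (Set.uIcc_subset_Icc ha hb hx))
  have hIeq₂ : ∀ a ∈ Set.Icc (0:ℝ) 1, ∀ b ∈ Set.Icc (0:ℝ) 1,
      (∫ s in a..b, H₂ s) = ∫ s in a..b, h₂ s := by
    intro a ha b hb
    exact intervalIntegral.integral_congr (fun x hx => hHe₂ x (Set.uIcc_subset_Icc ha hb hx))
  -- splitting the integral
  have hsplit₁ : ∀ t ∈ Set.Icc (0:ℝ) 1,
      (∫ s in t..(1:ℝ), h₁ s) = (∫ s in (0:ℝ)..1, h₁ s) - ∫ s in (0:ℝ)..t, h₁ s := by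
    intro t ht
    have h1 : IntervalIntegrable h₁ MeasureTheory.volume 0 t :=
      (hc₁.mono (Set.uIcc_subset_Icc h0m ht)).intervalIntegrable
    have h2 : IntervalIntegrable h₁ MeasureTheory.volume t 1 :=
      (hc₁.mono (Set.uIcc_subset_Icc ht h1m)).intervalIntegrable
    have := intervalIntegral.integral_add_adjacent_intervals h1 h2
    linarith
  have hsplit₂ : ∀ t ∈ Set.Icc (0:ℝ) 1,
      (∫ s in t..(1:ℝ), h₂ s) = (∫ s in (0:ℝ)..1, h₂ s) - ∫ s in (0:ℝ)..t, h₂ s := by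
    intro t ht
    have h1 : IntervalIntegrable h₂ MeasureTheory.volume 0 t :=
      (hc₂.mono (Set.uIcc_subset_Icc h0m ht)).intervalIntegrable
    have h2 : IntervalIntegrable h₂ MeasureTheory.volume t 1 :=
      (hc₂.mono (Set.uIcc_subset_Icc ht h1m)).intervalIntegrable
    have := intervalIntegral.integral_add_adjacent_intervals h1 h2
    linarith
  set I₁ : ℝ := ∫ s in (0:ℝ)..1, h₁ s with hI₁
  set I₂ : ℝ := ∫ s in (0:ℝ)..1, h₂ s with hI₂
  -- closed forms on Icc
  have key₂ : ∀ t ∈ Set.Icc (0:ℝ) 1,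
      h₂ t = α⁻¹ * (∫ s in (0:ℝ)..t, H₁ s) - α⁻¹ * (1/2) * I₁ := by
    intro t ht
    have e := heq₂ t ht
    rw [hsplit₁ t ht] at e
    rw [hIeq₁ 0 h0m t ht]
    have h' : h₂ t = α⁻¹ * (α * h₂ t) := by field_simp
    rw [h', e]; ring
  have key₁ : ∀ t ∈ Set.Icc (0:ℝ) 1,
      h₁ t = -(α⁻¹ * (∫ s in (0:ℝ)..t, H₂ s)) + α⁻¹ * (1/2) * I₂ := by
    intro t ht
    have e := heq₁ t ht
    rw [hsplit₂ t ht] at e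
    rw [hIeq₂ 0 h0m t ht]
    have h' : h₁ t = α⁻¹ * (α * h₁ t) := by field_simp
    rw [h', e]; ring
  -- derivatives
  have hd₂ : ∀ t ∈ Set.Icc (0:ℝ) 1,
      HasDerivWithinAt h₂ ((1/α) * h₁ t) (Set.Icc 0 1) t := by
    intro t ht
    have hF : HasDerivAt (fun u => ∫ s in (0:ℝ)..u, H₁ s) (H₁ t) t :=
      (hHc₁.integral_hasStrictDerivAt 0 t).hasDerivAt
    have hG : HasDerivAt (fun u => α⁻¹ * (∫ s in (0:ℝ)..u, H₁ s) - α⁻¹ * (1/2) * I₁)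
        (α⁻¹ * H₁ t) t := (hF.const_mul _).sub_const _
    have := (hG.hasDerivWithinAt (s := Set.Icc 0 1)).congr key₂ (key₂ t ht)
    rw [hHe₁ t ht] at this
    simpa [one_div] using this
  have hd₁ : ∀ t ∈ Set.Icc (0:ℝ) 1,
      HasDerivWithinAt h₁ (-(1/α) * h₂ t) (Set.Icc 0 1) t := by
    intro t ht
    have hF : HasDerivAt (fun u => ∫ s in (0:ℝ)..u, H₂ s) (H₂ t) t :=
      (hHc₂.integral_hasStrictDerivAt 0 t).hasDerivAt
    have hG : HasDerivAt (fun u => -(α⁻¹ * (∫ s in (0:ℝ)..u, H₂ s)) + α⁻¹ * (1/2) * I₂)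
        (-(α⁻¹ * H₂ t)) t := ((hF.const_mul _).neg).add_const _
    have := (hG.hasDerivWithinAt (s := Set.Icc 0 1)).congr key₁ (key₁ t ht)
    rw [hHe₂ t ht] at this
    simpa [one_div] using this
  -- boundary values
  have hb₂ : h₂ 1 + h₂ 0 = 0 := by
    have e0 := heq₂ 0 h0m
    have e1 := heq₂ 1 h1m
    simp only [intervalIntegral.integral_same] at e0 e1
    have : α * (h₂ 1 + h₂ 0) = 0 := by rw [mul_add, e0, e1]; ring
    exact (mul_eq_zero.mp this).resolve_left hα
  have hb₁ : h₁ 1 + h₁ 0 = 0 := by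
    have e0 := heq₁ 0 h0m
    have e1 := heq₁ 1 h1m
    simp only [intervalIntegral.integral_same] at e0 e1
    have : α * (h₁ 1 + h₁ 0) = 0 := by rw [mul_add, e0, e1]; ring
    exact (mul_eq_zero.mp this).resolve_left hα
  refine ⟨fun t ht => ⟨hd₁ t ht, hd₂ t ht⟩, ⟨hb₁, hb₂⟩, ?_⟩
  -- eigenvalue condition
  intro hnz
  set β : ℝ := 1/α with hβ
  have hlin : ∀ t : ℝ, HasDerivAt (fun x => β * x) β t := fun t => by
    simpa using (hasDerivAt_id t).const_mul β
  -- the two conserved quantities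
  have hu : ∀ t ∈ Set.Icc (0:ℝ) 1,
      HasDerivWithinAt (fun x => h₁ x * Real.cos (β * x) + h₂ x * Real.sin (β * x)) 0
        (Set.Icc 0 1) t := by
    intro t ht
    have H := ((hd₁ t ht).mul ((hlin t).cos.hasDerivWithinAt)).add
      ((hd₂ t ht).mul ((hlin t).sin.hasDerivWithinAt))
    convert H using 1 <;> try rfl
    ring
  have hv : ∀ t ∈ Set.Icc (0:ℝ) 1,
      HasDerivWithinAt (fun x => h₂ x * Real.cos (β * x) - h₁ x * Real.sin (β * x)) 0
        (Set.Icc 0 1) t := by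
    intro t ht
    have H := ((hd₂ t ht).mul ((hlin t).cos.hasDerivWithinAt)).sub
      ((hd₁ t ht).mul ((hlin t).sin.hasDerivWithinAt))
    convert H using 1 <;> try rfl
    ring
  have hucst : ∀ t ∈ Set.Icc (0:ℝ) 1,
      h₁ t * Real.cos (β * t) + h₂ t * Real.sin (β * t) = h₁ 0 := by
    intro t ht
    have := constant_of_has_deriv_right_zero
      (f := fun x => h₁ x * Real.cos (β * x) + h₂ x * Real.sin (β * x))
      (fun x hx => (hu x hx).continuousWithinAt)
      (fun x hx => (hu x (Set.Ico_subset_Icc_self hx)).mono_of_mem_nhdsWithin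
        (Icc_mem_nhdsGE_of_mem hx)) t ht
    simpa using this
  have hvcst : ∀ t ∈ Set.Icc (0:ℝ) 1,
      h₂ t * Real.cos (β * t) - h₁ t * Real.sin (β * t) = h₂ 0 := by
    intro t ht
    have := constant_of_has_deriv_right_zero
      (f := fun x => h₂ x * Real.cos (β * x) - h₁ x * Real.sin (β * x))
      (fun x hx => (hv x hx).continuousWithinAt)
      (fun x hx => (hv x (Set.Ico_subset_Icc_self hx)).mono_of_mem_nhdsWithin
        (Icc_mem_nhdsGE_of_mem hx)) t ht
    simpa using this
  set A : ℝ := h₁ 0 with hA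
  set B : ℝ := h₂ 0 with hB
  -- A² + B² ≠ 0
  push_neg at hnz
  obtain ⟨t₀, ht₀, hne⟩ := hnz
  have hsc : Real.sin (β * t₀) ^ 2 + Real.cos (β * t₀) ^ 2 = 1 := Real.sin_sq_add_cos_sq _
  have hAB : A^2 + B^2 = h₁ t₀ ^ 2 + h₂ t₀ ^ 2 := by
    have e1 := hucst t₀ ht₀
    have e2 := hvcst t₀ ht₀
    rw [← e1, ← e2]
    linear_combination (h₁ t₀ ^ 2 + h₂ t₀ ^ 2) * hsc
  have hABpos : 0 < A^2 + B^2 := by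
    rcases Classical.em (h₁ t₀ = 0) with h | h
    · have h2 : h₂ t₀ ≠ 0 := hne h
      have : 0 < h₂ t₀ ^ 2 := by positivity
      nlinarith
    · have : 0 < h₁ t₀ ^ 2 := by positivity
      nlinarith
  -- boundary equations at 1
  have e1 := hucst 1 h1m
  have e2 := hvcst 1 h1m
  rw [mul_one] at e1 e2
  have hh11 : h₁ 1 = -A := by rw [hA]; linarith
  have hh21 : h₂ 1 = -B := by rw [hB]; linarith
  rw [hh11, hh21] at e1 e2
  have hcos : Real.cos β = -1 := by
    have hz : (A^2 + B^2) * (Real.cos β + 1) = 0 := by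
      linear_combination (-A) * e1 + (-B) * e2
    have := (mul_eq_zero.mp hz).resolve_left (by positivity)
    linarith
  obtain ⟨k, hk⟩ := Real.cos_eq_neg_one_iff.mp hcos
  refine ⟨k, ?_⟩
  rw [← hk]
  ring
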